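/- Let T : ℝ^d × ℝ^d → ℝ^d be defined on all of ℝ^d × ℝ^d and weakly firmly nonexpansive with respect to a triple ℳ = {M_0, M_1, M_2} of d × d matrices, and suppose the set of fixed points of T (points w with w = T(w, w)) is nonempty. If ℳ satisfies Condition-M, then for any w^0, w^1 ∈ ℝ^d the sequence defined by w^{k+1} = T(w^k, w^{k−1}) converges; if in addition T is continuous, the sequence converges to a fixed point of T. -/

import Mathlib

open Matrix Filter Topology

noncomputable section

/-- Spectral norm (largest singular value) of a real matrix. -/
def specNorm {p q : Type*} [Fintype p] [Fintype q] [DecidableEq q]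
    (M : Matrix p q ℝ) : ℝ :=
  ‖LinearMap.toContinuousLinearMap (Matrix.toEuclideanLin M)‖

/-- The square root of a positive semidefinite matrix (the definition of
`Matrix.PosSemidef.sqrt` in the older Mathlib, which no longer exists). -/
def posSemidefSqrt {n : Type*} [Fintype n] [DecidableEq n] {A : Matrix n n ℝ}
    (hA : A.PosSemidef) : Matrix n n ℝ :=
  hA.1.eigenvectorUnitary.1 * diagonal ((↑) ∘ (√·) ∘ hA.1.eigenvalues) *
    (star hA.1.eigenvectorUnitary : Matrix n n ℝ)

/-- Condition-M for a triple of matrices: `M0 = M1 + M2`, `H := M0 + M2` is symmetric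
positive definite, and `‖H^{-1/2} M2 H^{-1/2}‖₂ < 1/2` (here `H^{-1/2}` is the positive
semidefinite square root of `H⁻¹`). -/
def ConditionM {d : Type*} [Fintype d] [DecidableEq d] (M0 M1 M2 : Matrix d d ℝ) : Prop :=
  M0 = M1 + M2 ∧ ∃ hH : (M0 + M2).PosDef,
    specNorm (posSemidefSqrt hH.inv.posSemidef * M2 * posSemidefSqrt hH.inv.posSemidef) < 1 / 2

/-- The cost functional defining the proximity operator `prox_{φ,H}` at input `x`. -/
def proxCost {ι : Type*} [Fintype ι] (φ : (ι → ℝ) → EReal) (H : Matrix ι ι ℝ)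
    (x u : ι → ℝ) : EReal :=
  ((((1 : ℝ) / 2) * ((u - x) ⬝ᵥ H.mulVec (u - x)) : ℝ) : EReal) + φ u

/-- `p = prox_{φ,H}(x)`: `p` is the unique minimizer of the prox cost. -/
def IsProx {ι : Type*} [Fintype ι] (φ : (ι → ℝ) → EReal) (H : Matrix ι ι ℝ)
    (x p : ι → ℝ) : Prop :=
  (∀ u, proxCost φ H x p ≤ proxCost φ H x u) ∧
  ∀ q, (∀ u, proxCost φ H x q ≤ proxCost φ H x u) → q = p

/-- Proper lower semicontinuous convex extended-real-valued function. -/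
def ProperConvexLsc {ι : Type*} [Fintype ι] (f : (ι → ℝ) → EReal) : Prop :=
  (∃ x, f x ≠ ⊤) ∧ (∀ x, f x ≠ ⊥) ∧ LowerSemicontinuous f ∧
  ∀ x y : ι → ℝ, ∀ t : ℝ, 0 < t → t < 1 →
    f (t • x + (1 - t) • y) ≤ (t : EReal) * f x + ((1 - t : ℝ) : EReal) * f y

/-- Scaling of an extended-real-valued function by a real constant. -/
def smulF {V : Type*} (c : ℝ) (φ : V → EReal) : V → EReal := fun u => (c : EReal) * φ u

/-- The conjugate of the indicator of `C = {b}`: `ι_C*(y) = ⟨y, b⟩`. -/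
def iotaCstar {m : ℕ} (b : Fin m → ℝ) : (Fin m → ℝ) → EReal :=
  fun y => ((y ⬝ᵥ b : ℝ) : EReal)

variable {s m : ℕ} {n : Fin s → ℕ}

/-- Index type for the concatenated variable `x = (x_1, …, x_s)`. -/
abbrev XIdx (n : Fin s → ℕ) := (i : Fin s) × Fin (n i)

/-- Index type for the full variable `v = (x, y)`. -/
abbrev FIdx (n : Fin s → ℕ) (m : ℕ) := XIdx n ⊕ Fin m

/-- The `i`-th block of a concatenated vector. -/
def blk (x : XIdx n → ℝ) (i : Fin s) : Fin (n i) → ℝ := fun j => x ⟨i, j⟩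

/-- The matrix `A = [A_1 … A_s]`. -/
def bigA (A : ∀ i : Fin s, Matrix (Fin m) (Fin (n i)) ℝ) : Matrix (Fin m) (XIdx n) ℝ :=
  Matrix.of fun r p => A p.1 r p.2

/-- The separable objective `∑ f_i(x_i)`. -/
def objSum (f : ∀ i : Fin s, (Fin (n i) → ℝ) → EReal) (x : XIdx n → ℝ) : EReal :=
  ∑ i, f i (blk x i)

/-- `∑ A_i x_i`. -/
def sumAx (A : ∀ i : Fin s, Matrix (Fin m) (Fin (n i)) ℝ) (x : XIdx n → ℝ) : Fin m → ℝ :=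
  ∑ i, (A i).mulVec (blk x i)

/-- `x` is a solution of problem (P). -/
def IsSolution (f : ∀ i : Fin s, (Fin (n i) → ℝ) → EReal)
    (A : ∀ i : Fin s, Matrix (Fin m) (Fin (n i)) ℝ) (b : Fin m → ℝ)
    (x : XIdx n → ℝ) : Prop :=
  sumAx A x = b ∧ ∀ z : XIdx n → ℝ, sumAx A z = b → objSum f x ≤ objSum f z

/-- `b ∈ A(ri(dom(∑ f_i)))` where `ri` is the relative (intrinsic) interior. -/
def RiCond (f : ∀ i : Fin s, (Fin (n i) → ℝ) → EReal)
    (A : ∀ i : Fin s, Matrix (Fin m) (Fin (n i)) ℝ) (b : Fin m → ℝ) : Prop :=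
  b ∈ (fun x => sumAx A x) '' intrinsicInterior ℝ {x : XIdx n → ℝ | objSum f x ≠ ⊤}

/-- The `x`-part of a full vector. -/
def xpart (v : FIdx n m → ℝ) : XIdx n → ℝ := fun p => v (Sum.inl p)

/-- The `y`-part of a full vector. -/
def ypart (v : FIdx n m → ℝ) : Fin m → ℝ := fun r => v (Sum.inr r)

/-- The function `Φ(x_1,…,x_s,y) = ∑ f_i(x_i) + ι_C*(y)`. -/
def PhiFun (f : ∀ i : Fin s, (Fin (n i) → ℝ) → EReal) (b : Fin m → ℝ)
    (v : FIdx n m → ℝ) : EReal :=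
  objSum f (xpart v) + iotaCstar b (ypart v)

/-- The diagonal matrix `R = diag((β/α_1)I, …, (β/α_s)I, (1/β)I)`. -/
def Rmat (α : Fin s → ℝ) (β : ℝ) : Matrix (FIdx n m) (FIdx n m) ℝ :=
  Matrix.diagonal (Sum.elim (fun p : XIdx n => β / α p.1) fun _ => 1 / β)

/-- The inverse `R⁻¹` of the diagonal matrix `R`. -/
def Rinv (α : Fin s → ℝ) (β : ℝ) : Matrix (FIdx n m) (FIdx n m) ℝ :=
  Matrix.diagonal (Sum.elim (fun p : XIdx n => α p.1 / β) fun _ => β)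

/-- The expansive matrix `E = [[I, −P⁻¹Aᵀ],[βA, I]]`. -/
def Emat (A : ∀ i : Fin s, Matrix (Fin m) (Fin (n i)) ℝ) (α : Fin s → ℝ) (β : ℝ) :
    Matrix (FIdx n m) (FIdx n m) ℝ :=
  Matrix.fromBlocks 1 (-(Matrix.diagonal (fun p : XIdx n => α p.1 / β) * (bigA A)ᵀ))
    (β • bigA A) 1

/-- The skew-symmetric matrix `S_A = [[0, −Aᵀ],[A, 0]]`. -/
def SAmat (A : ∀ i : Fin s, Matrix (Fin m) (Fin (n i)) ℝ) :
    Matrix (FIdx n m) (FIdx n m) ℝ :=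
  Matrix.fromBlocks 0 (-(bigA A)ᵀ) (bigA A) 0

/-- `w = 𝒯(v)`, where `𝒯(x_1,…,x_s,y) = (prox_{(α_1/β)f_1}x_1, …, prox_{(α_s/β)f_s}x_s,
prox_{β ι_C*}y)`. -/
def isT (f : ∀ i : Fin s, (Fin (n i) → ℝ) → EReal) (b : Fin m → ℝ)
    (α : Fin s → ℝ) (β : ℝ) (v w : FIdx n m → ℝ) : Prop :=
  (∀ i, IsProx (smulF (α i / β) (f i)) 1 (blk (xpart v) i) (blk (xpart w) i)) ∧
  IsProx (smulF β (iotaCstar b)) 1 (ypart v) (ypart w)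

/-- `w = T_ℳ(u₁, u₂)`, i.e. `w = 𝒯((E − R⁻¹M₀)w + R⁻¹M₁u₁ + R⁻¹M₂u₂)`. -/
def isTM (f : ∀ i : Fin s, (Fin (n i) → ℝ) → EReal)
    (A : ∀ i : Fin s, Matrix (Fin m) (Fin (n i)) ℝ) (b : Fin m → ℝ)
    (α : Fin s → ℝ) (β : ℝ) (M0 M1 M2 : Matrix (FIdx n m) (FIdx n m) ℝ)
    (u1 u2 w : FIdx n m → ℝ) : Prop :=
  isT f b α β ((Emat A α β - Rinv α β * M0).mulVec w + (Rinv α β * M1).mulVec u1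
    + (Rinv α β * M2).mulVec u2) w

/-- `T_ℳ` is well-defined. -/
def TMWellDefined (f : ∀ i : Fin s, (Fin (n i) → ℝ) → EReal)
    (A : ∀ i : Fin s, Matrix (Fin m) (Fin (n i)) ℝ) (b : Fin m → ℝ)
    (α : Fin s → ℝ) (β : ℝ) (M0 M1 M2 : Matrix (FIdx n m) (FIdx n m) ℝ) : Prop :=
  ∀ u1 u2 : FIdx n m → ℝ, ∃! w, isTM f A b α β M0 M1 M2 u1 u2 w


/-- An operator `T : ℝ^d × ℝ^d → ℝ^d` is weakly firmly nonexpansive with respect to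
`{M0, M1, M2}`. -/
def WeaklyFirmlyNonexpansive {d : Type*} [Fintype d]
    (T : (d → ℝ) × (d → ℝ) → (d → ℝ)) (M0 M1 M2 : Matrix d d ℝ) : Prop :=
  ∀ u1 w1 u2 w2 : d → ℝ,
    (T (u2, w2) - T (u1, w1)) ⬝ᵥ M0.mulVec (T (u2, w2) - T (u1, w1)) ≤
    (T (u2, w2) - T (u1, w1)) ⬝ᵥ (M1.mulVec (u2 - u1) + M2.mulVec (w2 - w1))

lemma norm_tendsto_zero_of_sq_le {E : Type*} [NormedAddCommGroup E]
    (x : ℕ → E) (g : ℕ → ℝ) (c : ℝ) (hc : 0 < c)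
    (hle : ∀ k, c * ‖x k‖^2 ≤ g k) (hg : Tendsto g atTop (𝓝 0)) :
    Tendsto x atTop (𝓝 0) := by
  have hsq : Tendsto (fun k => Real.sqrt (g k / c)) atTop (𝓝 0) := by
    have : Tendsto (fun k => g k / c) atTop (𝓝 0) := by
      simpa using hg.div_const c
    have h := (Real.continuous_sqrt.tendsto 0).comp this
    rw [Real.sqrt_zero] at h
    exact h
  refine squeeze_zero_norm (fun k => ?_) hsq
  have h1 : ‖x k‖^2 ≤ g k / c := by
    rw [le_div_iff₀ hc]; linarith [hle k]
  calc ‖x k‖ = Real.sqrt (‖x k‖^2) := by rw [Real.sqrt_sq (norm_nonneg _)]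
  _ ≤ Real.sqrt (g k / c) := Real.sqrt_le_sqrt h1

lemma lyap_aux {E : Type*} [NormedAddCommGroup E] [InnerProductSpace ℝ E]
    (a : ℕ → E) (Q : E →ₗ[ℝ] E) (q : ℝ) (hq0 : 0 ≤ q) (hq : q < 1/2)
    (hQB : ∀ x y : E, |(inner ℝ x (Q y) : ℝ)| ≤ q * ‖x‖ * ‖y‖)
    (key : ∀ k : ℕ, (inner ℝ (a (k+2)) (a (k+2) - a (k+1)) : ℝ) ≤
      inner ℝ (a (k+2)) (Q ((a (k+2) - a (k+1)) - (a (k+1) - a k)))) :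
    Tendsto (fun k => a (k+1) - a k) atTop (𝓝 0) ∧
    (∃ C : ℝ, ∀ k, ‖a k‖ ≤ C) ∧
    (∀ ψ : ℕ → ℕ, StrictMono ψ → Tendsto (fun j => a (ψ j)) atTop (𝓝 0) →
      Tendsto a atTop (𝓝 0)) := by
  set Wf : ℕ → ℝ := fun k => ‖a (k+1)‖^2/2 - (inner ℝ (a (k+1)) (Q (a (k+1) - a k)) : ℝ)
      + q/2 * ‖a (k+1) - a k‖^2 with hWf
  clear_value Wf
  have hid : ∀ x y : E, (inner ℝ x (x - y) : ℝ) = ‖x‖^2/2 - ‖y‖^2/2 + ‖x - y‖^2/2 := by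
    intro x y
    have h1 : ‖x - y‖^2 = ‖x‖^2 - 2 * inner ℝ x y + ‖y‖^2 := norm_sub_sq_real x y
    have h2 : (inner ℝ x (x - y) : ℝ) = ‖x‖^2 - inner ℝ x y := by
      rw [inner_sub_right, real_inner_self_eq_norm_sq]
    linarith
  have hstep : ∀ k, Wf (k+1) + (1/2 - q) * ‖a (k+2) - a (k+1)‖^2 ≤ Wf k := by
    intro k
    have hk := key k
    have hsplit : (inner ℝ (a (k+2)) (Q ((a (k+2) - a (k+1)) - (a (k+1) - a k))) : ℝ)
        = (inner ℝ (a (k+2)) (Q (a (k+2) - a (k+1))) : ℝ)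
          - (inner ℝ (a (k+1)) (Q (a (k+1) - a k)) : ℝ)
          - (inner ℝ (a (k+2) - a (k+1)) (Q (a (k+1) - a k)) : ℝ) := by
      rw [map_sub, inner_sub_right, inner_sub_left]; ring
    have hb := abs_le.mp (hQB (a (k+2) - a (k+1)) (a (k+1) - a k))
    have hcs : -(inner ℝ (a (k+2) - a (k+1)) (Q (a (k+1) - a k)) : ℝ)
        ≤ q/2 * ‖a (k+2) - a (k+1)‖^2 + q/2 * ‖a (k+1) - a k‖^2 := by
      nlinarith [hb.1, mul_nonneg hq0 (sq_nonneg (‖a (k+2) - a (k+1)‖ - ‖a (k+1) - a k‖))]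
    have e1 := hid (a (k+2)) (a (k+1))
    rw [hsplit, e1] at hk
    simp only [hWf]
    linarith
  have hlow : ∀ k, (1 - q)/2 * ‖a (k+1)‖^2 ≤ Wf k := by
    intro k
    have hb := abs_le.mp (hQB (a (k+1)) (a (k+1) - a k))
    simp only [hWf]
    nlinarith [hb.2, mul_nonneg hq0 (sq_nonneg (‖a (k+1)‖ - ‖a (k+1) - a k‖)),
      sq_nonneg (‖a (k+1) - a k‖)]
  have hnn : ∀ k, 0 ≤ Wf k := by
    intro k
    have h1 := mul_nonneg (by linarith : (0:ℝ) ≤ (1-q)/2) (sq_nonneg ‖a (k+1)‖)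
    linarith [hlow k]
  have hanti : Antitone Wf := antitone_nat_of_succ_le fun k => by
    have h1 := mul_nonneg (by linarith : (0:ℝ) ≤ 1/2 - q) (sq_nonneg ‖a (k+2) - a (k+1)‖)
    linarith [hstep k]
  have hbdd : BddBelow (Set.range Wf) := ⟨0, by rintro _ ⟨k, rfl⟩; exact hnn k⟩
  have hWtend : Tendsto Wf atTop (𝓝 (⨅ k, Wf k)) := tendsto_atTop_ciInf hanti hbdd
  have hc : (0:ℝ) < 1/2 - q := by linarith
  have hdiff : Tendsto (fun k => Wf k - Wf (k+1)) atTop (𝓝 0) := by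
    have h2 : Tendsto (fun k => Wf (k+1)) atTop (𝓝 (⨅ k, Wf k)) :=
      hWtend.comp (tendsto_add_atTop_nat 1)
    simpa using hWtend.sub h2
  have hb2 : Tendsto (fun k => a (k+2) - a (k+1)) atTop (𝓝 0) :=
    norm_tendsto_zero_of_sq_le _ _ _ hc (fun k => by linarith [hstep k]) hdiff
  have hb0 : Tendsto (fun k => a (k+1) - a k) atTop (𝓝 0) :=
    (tendsto_add_atTop_iff_nat 1).mp hb2
  refine ⟨hb0, ?_, ?_⟩
  · refine ⟨‖a 0‖ + Real.sqrt (Wf 0 / ((1 - q)/2)), fun k => ?_⟩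
    match k with
    | 0 => simpa using Real.sqrt_nonneg _
    | (k+1) =>
      have h1 : ‖a (k+1)‖^2 ≤ Wf 0 / ((1 - q)/2) := by
        rw [le_div_iff₀ (by linarith)]
        calc ‖a (k+1)‖^2 * ((1-q)/2) = (1-q)/2 * ‖a (k+1)‖^2 := by ring
        _ ≤ Wf k := hlow k
        _ ≤ Wf 0 := hanti (Nat.zero_le k)
      have : ‖a (k+1)‖ ≤ Real.sqrt (Wf 0 / ((1 - q)/2)) := by
        calc ‖a (k+1)‖ = Real.sqrt (‖a (k+1)‖^2) := by rw [Real.sqrt_sq (norm_nonneg _)]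
        _ ≤ _ := Real.sqrt_le_sqrt h1
      linarith [norm_nonneg (a 0)]
  · intro ψ hψ hψ0
    have hbs : Tendsto (fun j => a (ψ j + 1) - a (ψ j)) atTop (𝓝 0) :=
      hb0.comp hψ.tendsto_atTop
    have ha1 : Tendsto (fun j => a (ψ j + 1)) atTop (𝓝 0) := by
      have := hψ0.add hbs
      simpa using this
    have hWψ : Tendsto (fun j => Wf (ψ j)) atTop (𝓝 0) := by
      have t1 : Tendsto (fun j => ‖a (ψ j + 1)‖^2/2) atTop (𝓝 0) := by
        have := (ha1.norm.pow 2).div_const 2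
        simpa using this
      have t2 : Tendsto (fun j => (inner ℝ (a (ψ j + 1)) (Q (a (ψ j + 1) - a (ψ j))) : ℝ))
          atTop (𝓝 0) := by
        refine squeeze_zero_norm
          (a := fun j => q * ‖a (ψ j + 1)‖ * ‖a (ψ j + 1) - a (ψ j)‖)
          (fun j => by
            rw [Real.norm_eq_abs]
            exact hQB (a (ψ j + 1)) (a (ψ j + 1) - a (ψ j))) ?_
        have := ((ha1.norm.const_mul q).mul hbs.norm)
        simpa using this
      have t3 : Tendsto (fun j => q/2 * ‖a (ψ j + 1) - a (ψ j)‖^2) atTop (𝓝 0) := by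
        have := (hbs.norm.pow 2).const_mul (q/2)
        simpa using this
      simp only [hWf]
      simpa using (t1.sub t2).add t3
    have hinf : (⨅ k, Wf k) = 0 :=
      tendsto_nhds_unique (hWtend.comp hψ.tendsto_atTop) hWψ
    rw [hinf] at hWtend
    have ha : Tendsto (fun k => a (k+1)) atTop (𝓝 0) :=
      norm_tendsto_zero_of_sq_le _ _ _ (by linarith : (0:ℝ) < (1-q)/2)
        (fun k => hlow k) hWtend
    exact (tendsto_add_atTop_iff_nat 1).mp ha

lemma posSemidefSqrt_mul_self {n : Type*} [Fintype n] [DecidableEq n] {A : Matrix n n ℝ}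
    (hA : A.PosSemidef) : posSemidefSqrt hA * posSemidefSqrt hA = A := by
  have hU : (star hA.1.eigenvectorUnitary : Matrix n n ℝ) * hA.1.eigenvectorUnitary.1 = 1 :=
    Unitary.coe_star_mul_self _
  conv_rhs => rw [hA.1.spectral_theorem, Unitary.conjStarAlgAut_apply]
  simp only [posSemidefSqrt]
  rw [show ∀ a b c e f g : Matrix n n ℝ, a * b * c * (e * f * g) = a * b * (c * e) * f * g by
    intros; simp only [Matrix.mul_assoc]]
  rw [hU, Matrix.mul_one, Matrix.mul_assoc _ (diagonal _) (diagonal _), diagonal_mul_diagonal]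
  congr 3
  funext i
  simp [Real.mul_self_sqrt (hA.eigenvalues_nonneg i)]

lemma posSemidefSqrt_conjTranspose {n : Type*} [Fintype n] [DecidableEq n] {A : Matrix n n ℝ}
    (hA : A.PosSemidef) : (posSemidefSqrt hA)ᴴ = posSemidefSqrt hA := by
  simp only [posSemidefSqrt, conjTranspose_mul, diagonal_conjTranspose, Matrix.mul_assoc]
  simp [Matrix.star_eq_conjTranspose]

set_option maxHeartbeats 1600000 in
/-- if `T` is weakly firmly nonexpansive w.r.t. `ℳ`, has a fixed point, and `ℳ`
satisfies Condition-M, then the two-step iteration converges; if `T` is moreover continuous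
it converges to a fixed point of `T`. -/
theorem two_step_iteration_converges {d : ℕ}
    (T : ((Fin d → ℝ) × (Fin d → ℝ)) → (Fin d → ℝ))
    (M0 M1 M2 : Matrix (Fin d) (Fin d) ℝ)
    (hT : WeaklyFirmlyNonexpansive T M0 M1 M2)
    (hfix : ∃ w : Fin d → ℝ, T (w, w) = w)
    (hM : ConditionM M0 M1 M2) :
    ∀ w0 w1 : Fin d → ℝ, ∀ W : ℕ → Fin d → ℝ,
      W 0 = w0 → W 1 = w1 → (∀ k : ℕ, W (k + 2) = T (W (k + 1), W k)) →
      (∃ L : Fin d → ℝ, Tendsto W atTop (nhds L)) ∧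
      (Continuous T → ∃ L : Fin d → ℝ, Tendsto W atTop (nhds L) ∧ T (L, L) = L) := by
  intro w0 w1 W hW0 hW1 hWrec
  obtain ⟨hM01, hH, hq⟩ := hM
  obtain ⟨p0, hp0⟩ := hfix
  set S : Matrix (Fin d) (Fin d) ℝ := posSemidefSqrt hH.inv.posSemidef with hSdef
  set q : ℝ := specNorm (S * M2 * S) with hqdef
  have hq0 : 0 ≤ q := norm_nonneg _
  have hdetH : IsUnit (M0 + M2).det := hH.det_pos.ne'.isUnit
  have hSS : S * S = (M0 + M2)⁻¹ := posSemidefSqrt_mul_self _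
  have hSdet : IsUnit S.det := by
    have h := hH.inv.det_pos
    rw [← hSS, Matrix.det_mul] at h
    exact isUnit_iff_ne_zero.mpr (fun h0 => by rw [h0, mul_zero] at h; exact lt_irrefl 0 h)
  set R : Matrix (Fin d) (Fin d) ℝ := S⁻¹ with hRdef
  have hRS : R * S = 1 := Matrix.nonsing_inv_mul S hSdet
  have hSR : S * R = 1 := Matrix.mul_nonsing_inv S hSdet
  have hSsym : Sᵀ = S := by
    have h : Sᴴ = S := posSemidefSqrt_conjTranspose _
    rwa [Matrix.conjTranspose_eq_transpose_of_trivial] at h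
  have hRsym : Rᵀ = R := by rw [hRdef, Matrix.transpose_nonsing_inv, hSsym]
  have hRR : R * R = M0 + M2 := by
    rw [hRdef, ← Matrix.mul_inv_rev, hSS, Matrix.nonsing_inv_nonsing_inv _ hdetH]
  have hvec : ∀ (A : Matrix (Fin d) (Fin d) ℝ) (x : Fin d → ℝ), x ᵥ* A = Aᵀ *ᵥ x := by
    intro A x
    simpa using Matrix.vecMul_transpose Aᵀ x
  set toE : (Fin d → ℝ) ≃ EuclideanSpace ℝ (Fin d) := (WithLp.equiv 2 (Fin d → ℝ)).symm
    with htoEdef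
  set F : (Fin d → ℝ) → EuclideanSpace ℝ (Fin d) := fun x => toE (R *ᵥ x) with hFdef
  set QL : EuclideanSpace ℝ (Fin d) →ₗ[ℝ] EuclideanSpace ℝ (Fin d) :=
    Matrix.toEuclideanLin (S * M2 * S) with hQLdef
  have hQLapp : ∀ y : Fin d → ℝ, QL (toE y) = toE ((S * M2 * S) *ᵥ y) := fun y =>
    rfl
  have hinner : ∀ x y : Fin d → ℝ, (inner ℝ (toE x) (toE y) : ℝ) = x ⬝ᵥ y := by
    intro x y
    simp [htoEdef, PiLp.inner_apply, dotProduct, WithLp.equiv_symm_apply,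
      RCLike.inner_apply, mul_comm]
  have hFdot : ∀ x y, x ⬝ᵥ ((M0 + M2) *ᵥ y) = (inner ℝ (F x) (F y) : ℝ) := by
    intro x y
    rw [hFdef]
    simp only []
    rw [hinner, ← hRR, ← Matrix.mulVec_mulVec, Matrix.dotProduct_mulVec, hvec, hRsym]
  have hFdotM2 : ∀ x y, x ⬝ᵥ (M2 *ᵥ y) = (inner ℝ (F x) (QL (F y)) : ℝ) := by
    intro x y
    have hdec : M2 = R * ((S * M2 * S) * R) := by
      calc M2 = (R * S) * M2 * (S * R) := by rw [hRS, hSR, one_mul, mul_one]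
      _ = R * ((S * M2 * S) * R) := by simp only [Matrix.mul_assoc]
    conv_lhs => rw [hdec]
    rw [hFdef]
    simp only []
    rw [hQLapp, hinner, ← Matrix.mulVec_mulVec, Matrix.dotProduct_mulVec, hvec, hRsym,
      ← Matrix.mulVec_mulVec]
  have hQB : ∀ x y : EuclideanSpace ℝ (Fin d), |(inner ℝ x (QL y) : ℝ)| ≤ q * ‖x‖ * ‖y‖ := by
    intro x y
    have h1 : |(inner ℝ x (QL y) : ℝ)| ≤ ‖x‖ * ‖QL y‖ := abs_real_inner_le_norm x (QL y)
    have h2 : ‖QL y‖ ≤ q * ‖y‖ := by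
      have h3 := (LinearMap.toContinuousLinearMap QL).le_opNorm y
      rw [hqdef]
      exact h3
    calc |(inner ℝ x (QL y) : ℝ)| ≤ ‖x‖ * ‖QL y‖ := h1
    _ ≤ ‖x‖ * (q * ‖y‖) := mul_le_mul_of_nonneg_left h2 (norm_nonneg x)
    _ = q * ‖x‖ * ‖y‖ := by ring
  -- continuity infrastructure
  have hcontE : Continuous toE := PiLp.continuous_toLp 2 (fun _ : Fin d => ℝ)
  have hcontO : Continuous (toE.symm) := PiLp.continuous_ofLp 2 (fun _ : Fin d => ℝ)
  have hmvc : ∀ A : Matrix (Fin d) (Fin d) ℝ, Continuous (fun x : Fin d → ℝ => A *ᵥ x) :=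
    fun A => (Matrix.mulVecLin A).continuous_of_finiteDimensional
  have hcontF : Continuous F := hcontE.comp (hmvc R)
  have hF0 : F 0 = 0 := by
    rw [hFdef]; simp only [Matrix.mulVec_zero]; rfl
  have hFsub : ∀ x y, F x - F y = F (x - y) := by
    intro x y
    rw [hFdef]; simp only [Matrix.mulVec_sub]
    rfl
  have hrecover : ∀ x : Fin d → ℝ, S *ᵥ (toE.symm (F x)) = x := by
    intro x
    rw [hFdef]; simp only []
    rw [htoEdef]
    simp only [Equiv.symm_symm, Equiv.apply_symm_apply]
    rw [Matrix.mulVec_mulVec, hSR, Matrix.one_mulVec]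
  -- scalar expansion helpers
  have hM0v : ∀ z y : Fin d → ℝ, z ⬝ᵥ (M0 *ᵥ y) = z ⬝ᵥ ((M0 + M2) *ᵥ y) - z ⬝ᵥ (M2 *ᵥ y) := by
    intro z y; rw [Matrix.add_mulVec, dotProduct_add]; ring
  have hM1v : ∀ z y : Fin d → ℝ,
      z ⬝ᵥ (M1 *ᵥ y) = z ⬝ᵥ ((M0 + M2) *ᵥ y) - 2 * (z ⬝ᵥ (M2 *ᵥ y)) := by
    intro z y
    have h : M0 + M2 = M1 + M2 + M2 := by rw [← hM01]
    rw [h, Matrix.add_mulVec, Matrix.add_mulVec, dotProduct_add, dotProduct_add]; ring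
  -- the key inequality for any fixed point
  have hkey : ∀ (p : Fin d → ℝ), T (p, p) = p → ∀ k : ℕ,
      (inner ℝ (F (W (k+2) - p)) (F (W (k+2) - p) - F (W (k+1) - p)) : ℝ) ≤
      inner ℝ (F (W (k+2) - p))
        (QL ((F (W (k+2) - p) - F (W (k+1) - p)) - (F (W (k+1) - p) - F (W k - p)))) := by
    intro p hp k
    have base := hT p p (W (k+1)) (W k)
    rw [← hWrec k, hp] at base
    rw [hFsub, hFsub, hFsub]
    rw [← hFdot, ← hFdotM2]
    rw [dotProduct_add] at base
    have e1 := hM0v (W (k+2) - p) (W (k+2) - p)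
    have e2 := hM1v (W (k+2) - p) (W (k+1) - p)
    rw [e1, e2] at base
    have hexp1 : (W (k+2) - p) ⬝ᵥ ((M0 + M2) *ᵥ ((W (k+2) - p) - (W (k+1) - p)))
        = (W (k+2) - p) ⬝ᵥ ((M0 + M2) *ᵥ (W (k+2) - p))
          - (W (k+2) - p) ⬝ᵥ ((M0 + M2) *ᵥ (W (k+1) - p)) := by
      simp only [Matrix.mulVec_sub, dotProduct_sub]
    have hexp2 : (W (k+2) - p) ⬝ᵥ (M2 *ᵥ ((W (k+2) - p) - (W (k+1) - p) - ((W (k+1) - p) - (W k - p))))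
        = (W (k+2) - p) ⬝ᵥ (M2 *ᵥ (W (k+2) - p))
          - 2 * ((W (k+2) - p) ⬝ᵥ (M2 *ᵥ (W (k+1) - p)))
          + (W (k+2) - p) ⬝ᵥ (M2 *ᵥ (W k - p)) := by
      simp only [Matrix.mulVec_sub, dotProduct_sub]; ring
    rw [hexp1, hexp2]
    linarith
  -- run the Lyapunov analysis at the initial fixed point p0
  obtain ⟨hbd0, ⟨C, hC⟩, -⟩ :=
    lyap_aux (fun k => F (W k - p0)) QL q hq0 hq hQB (hkey p0 hp0)
  -- difference of iterates tends to zero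
  have hbd : Tendsto (fun k => F (W (k+1) - W k)) atTop (𝓝 0) := by
    have heq : (fun k => F (W (k+1) - p0) - F (W k - p0)) = fun k => F (W (k+1) - W k) := by
      funext k
      rw [hFsub]
      congr 1
      abel
    rwa [heq] at hbd0
  have hSofE : Continuous fun z : EuclideanSpace ℝ (Fin d) => S *ᵥ (toE.symm z) :=
    (hmvc S).comp hcontO
  have hE0 : toE.symm (0 : EuclideanSpace ℝ (Fin d)) = 0 := rfl
  have hdW : Tendsto (fun k => W (k+1) - W k) atTop (𝓝 0) := by
    have h2 := (hSofE.tendsto 0).comp hbd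
    have heq : (fun k => S *ᵥ (toE.symm (F (W (k+1) - W k)))) = fun k => W (k+1) - W k :=
      funext fun k => hrecover _
    rw [Function.comp_def, heq] at h2
    simpa [hE0] using h2
  -- extract a convergent subsequence
  obtain ⟨α, -, ψ, hψ, hψtend⟩ :=
    (isCompact_closedBall (0 : EuclideanSpace ℝ (Fin d)) C).tendsto_subseq
      (fun k => Metric.mem_closedBall.mpr (by simpa using hC k))
  set v : Fin d → ℝ := p0 + S *ᵥ (toE.symm α) with hvdef
  have hWψ : Tendsto (fun j => W (ψ j)) atTop (𝓝 v) := by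
    have hcont : Continuous fun z : EuclideanSpace ℝ (Fin d) => p0 + S *ᵥ (toE.symm z) :=
      continuous_const.add hSofE
    have h2 := (hcont.tendsto α).comp hψtend
    have heq : (fun j => p0 + S *ᵥ (toE.symm (F (W (ψ j) - p0)))) = fun j => W (ψ j) := by
      funext j
      rw [hrecover]
      abel
    rw [Function.comp_def] at h2
    simp only [Function.comp_apply] at h2
    rwa [heq] at h2
  have hψtop : Tendsto ψ atTop atTop := hψ.tendsto_atTop
  have hW1ψ : Tendsto (fun j => W (ψ j + 1)) atTop (𝓝 v) := by
    have h2 := hWψ.add (hdW.comp hψtop)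
    have heq : (fun j => W (ψ j) + (W (ψ j + 1) - W (ψ j))) = fun j => W (ψ j + 1) := by
      funext j; abel
    rw [Function.comp_def] at h2
    simp only [] at h2
    rw [heq] at h2
    simpa using h2
  have hW2ψ : Tendsto (fun j => W (ψ j + 2)) atTop (𝓝 v) := by
    have htop1 : Tendsto (fun j => ψ j + 1) atTop atTop :=
      tendsto_atTop_mono (fun j => Nat.le_succ (ψ j)) hψtop
    have h2 := hW1ψ.add (hdW.comp htop1)
    have heq : (fun j => W (ψ j + 1) + (W (ψ j + 1 + 1) - W (ψ j + 1))) = fun j => W (ψ j + 2) := by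
      funext j
      have : ψ j + 1 + 1 = ψ j + 2 := rfl
      rw [this]; abel
    rw [Function.comp_def] at h2
    simp only [] at h2
    rw [heq] at h2
    simpa using h2
  -- the cluster point is a fixed point
  have hvfix : T (v, v) = v := by
    have hEform : ∀ j : ℕ,
        (inner ℝ (F (W (ψ j + 2) - T (v, v))) (F (W (ψ j + 2) - T (v, v))) : ℝ)
          - inner ℝ (F (W (ψ j + 2) - T (v, v))) (QL (F (W (ψ j + 2) - T (v, v)))) ≤
        (inner ℝ (F (W (ψ j + 2) - T (v, v))) (F (W (ψ j + 1) - v)) : ℝ)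
          - 2 * inner ℝ (F (W (ψ j + 2) - T (v, v))) (QL (F (W (ψ j + 1) - v)))
          + inner ℝ (F (W (ψ j + 2) - T (v, v))) (QL (F (W (ψ j) - v))) := by
      intro j
      have base := hT v v (W (ψ j + 1)) (W (ψ j))
      rw [← hWrec (ψ j)] at base
      rw [dotProduct_add] at base
      rw [hM0v, hM1v] at base
      rw [hFdot, hFdot, hFdotM2, hFdotM2, hFdotM2] at base
      linarith
    set r : Fin d → ℝ := v - T (v, v) with hrdef
    have hFg : Tendsto (fun j => F (W (ψ j + 2) - T (v, v))) atTop (𝓝 (F r)) :=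
      (hcontF.tendsto _).comp (hW2ψ.sub_const (T (v, v)))
    have hFu : Tendsto (fun j => F (W (ψ j + 1) - v)) atTop (𝓝 0) := by
      have h2 := (hcontF.tendsto _).comp (hW1ψ.sub_const v)
      rw [Function.comp_def] at h2
      simpa [hF0] using h2
    have hFw : Tendsto (fun j => F (W (ψ j) - v)) atTop (𝓝 0) := by
      have h2 := (hcontF.tendsto _).comp (hWψ.sub_const v)
      rw [Function.comp_def] at h2
      simpa [hF0] using h2
    have hQLc : Continuous QL := QL.continuous_of_finiteDimensional
    have hlhs : Tendsto (fun j =>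
        (inner ℝ (F (W (ψ j + 2) - T (v, v))) (F (W (ψ j + 2) - T (v, v))) : ℝ)
          - inner ℝ (F (W (ψ j + 2) - T (v, v))) (QL (F (W (ψ j + 2) - T (v, v)))))
        atTop (𝓝 ((inner ℝ (F r) (F r) : ℝ) - inner ℝ (F r) (QL (F r)))) :=
      (hFg.inner hFg).sub (hFg.inner ((hQLc.tendsto _).comp hFg))
    have hrhs : Tendsto (fun j =>
        (inner ℝ (F (W (ψ j + 2) - T (v, v))) (F (W (ψ j + 1) - v)) : ℝ)
          - 2 * inner ℝ (F (W (ψ j + 2) - T (v, v))) (QL (F (W (ψ j + 1) - v)))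
          + inner ℝ (F (W (ψ j + 2) - T (v, v))) (QL (F (W (ψ j) - v))))
        atTop (𝓝 0) := by
      have h1 : Tendsto (fun j =>
          (inner ℝ (F (W (ψ j + 2) - T (v, v))) (F (W (ψ j + 1) - v)) : ℝ)) atTop
          (𝓝 (inner ℝ (F r) (0 : EuclideanSpace ℝ (Fin d)))) := hFg.inner hFu
      have h2 : Tendsto (fun j =>
          2 * (inner ℝ (F (W (ψ j + 2) - T (v, v))) (QL (F (W (ψ j + 1) - v))) : ℝ)) atTop
          (𝓝 (2 * inner ℝ (F r) (QL (0 : EuclideanSpace ℝ (Fin d))))) :=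
        (hFg.inner ((hQLc.tendsto _).comp hFu)).const_mul 2
      have h3 : Tendsto (fun j =>
          (inner ℝ (F (W (ψ j + 2) - T (v, v))) (QL (F (W (ψ j) - v))) : ℝ)) atTop
          (𝓝 (inner ℝ (F r) (QL (0 : EuclideanSpace ℝ (Fin d))))) :=
        hFg.inner ((hQLc.tendsto _).comp hFw)
      have h4 := (h1.sub h2).add h3
      simpa using h4
    have hle : (inner ℝ (F r) (F r) : ℝ) - inner ℝ (F r) (QL (F r)) ≤ 0 :=
      le_of_tendsto_of_tendsto' hlhs hrhs hEform
    have hnock : ‖F r‖ = 0 := by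
      have h1 : (inner ℝ (F r) (F r) : ℝ) = ‖F r‖^2 := real_inner_self_eq_norm_sq (F r)
      have h2 := abs_le.mp (hQB (F r) (F r))
      nlinarith [norm_nonneg (F r)]
    have hFr0 : F r = 0 := norm_eq_zero.mp hnock
    have hr0 : r = 0 := by
      have := hrecover r
      rw [hFr0] at this
      simpa [hE0] using this.symm
    have := sub_eq_zero.mp (hrdef ▸ hr0 : v - T (v, v) = 0)
    exact this.symm
  -- rerun the Lyapunov analysis at the fixed point v
  obtain ⟨-, -, hsub⟩ :=
    lyap_aux (fun k => F (W k - v)) QL q hq0 hq hQB (hkey v hvfix)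
  have hFv : Tendsto (fun j => F (W (ψ j) - v)) atTop (𝓝 0) := by
    have h2 := (hcontF.tendsto _).comp (hWψ.sub_const v)
    rw [Function.comp_def] at h2
    simpa [hF0] using h2
  have hconv0 := hsub ψ hψ hFv
  have hWv : Tendsto W atTop (𝓝 v) := by
    have h2 := (hSofE.tendsto 0).comp hconv0
    have heq : (fun k => S *ᵥ (toE.symm (F (W k - v)))) = fun k => W k - v :=
      funext fun k => hrecover _
    rw [Function.comp_def, heq] at h2
    have h3 : Tendsto (fun k => (W k - v) + v) atTop (𝓝 (0 + v)) := by
      refine Tendsto.add_const v ?_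
      simpa [hE0] using h2
    simpa using h3
  exact ⟨⟨v, hWv⟩, fun _ => ⟨v, hWv, hvfix⟩⟩


end
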